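/- Let θ > 0, λ > 0, π ∈ (0,1], and β ∈ [0,1). Then the iterated improper integral ∫₀^∞ ∫_{z₂}^∞ z₁^{βθ} · (1/π) · exp(−(λ/π) z₂^{−θ}) · (θ λ z₁^{−θ−1}) · (θ λ z₂^{−θ−1}) dz₁ dz₂ equals Γ(1−β) · λ^{β} · π^{1−β}, where Γ is the Gamma function. -/

import Mathlib

open MeasureTheory

/-- **Key integral in Proposition 1 (Law of Motion in a Multi-Sector Framework).**
Integrating `z₁ ^ (β θ)` against the joint density of the best and second-best
productivity draws of the lowest-cost supplier (Fréchet location `λ`, shape `θ`,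
trade share `p`) gives `Γ(1-β) * λ ^ β * p ^ (1-β)`. -/
theorem diffusion_integral (θ lam p β : ℝ) (hθ : 0 < θ) (hlam : 0 < lam)
    (hp : p ∈ Set.Ioc (0 : ℝ) 1) (hβ : β ∈ Set.Ico (0 : ℝ) 1) :
    (∫ z₂ in Set.Ioi (0 : ℝ), ∫ z₁ in Set.Ioi z₂,
        z₁ ^ (β * θ) *
          ((1 / p) * Real.exp (-(lam / p) * z₂ ^ (-θ)) *
            (θ * lam * z₁ ^ (-θ - 1)) * (θ * lam * z₂ ^ (-θ - 1))))
      = Real.Gamma (1 - β) * lam ^ β * p ^ (1 - β) := by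
  obtain ⟨hp0, hp1⟩ := hp
  obtain ⟨hβ0, hβ1⟩ := hβ
  have h1β : (0:ℝ) < 1 - β := by linarith
  have hb : 0 < lam / p := div_pos hlam hp0
  set g : ℝ → ℝ := fun y => (lam^2/(p*(1-β))) * (y^(1-β) * Real.exp (-(lam/p)*y)) with hg
  have hexp : β * θ - θ - 1 < -1 := by nlinarith
  have step1 : (∫ z₂ in Set.Ioi (0 : ℝ), ∫ z₁ in Set.Ioi z₂,
        z₁ ^ (β * θ) *
          ((1 / p) * Real.exp (-(lam / p) * z₂ ^ (-θ)) *
            (θ * lam * z₁ ^ (-θ - 1)) * (θ * lam * z₂ ^ (-θ - 1))))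
      = ∫ z in Set.Ioi (0:ℝ), (|(-θ)| * z ^ ((-θ) - 1)) • g (z ^ (-θ)) := by
    refine setIntegral_congr_fun measurableSet_Ioi (fun z hz => ?_)
    have hz0 : (0:ℝ) < z := hz
    have inner : (∫ z₁ in Set.Ioi z,
        z₁ ^ (β * θ) *
          ((1 / p) * Real.exp (-(lam / p) * z ^ (-θ)) *
            (θ * lam * z₁ ^ (-θ - 1)) * (θ * lam * z ^ (-θ - 1))))
        = ((1 / p) * Real.exp (-(lam / p) * z ^ (-θ)) * (θ * lam) *
            (θ * lam * z ^ (-θ - 1))) * (-z ^ (β * θ - θ - 1 + 1) / (β * θ - θ - 1 + 1)) := by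
      rw [← integral_Ioi_rpow_of_lt hexp hz0, ← integral_const_mul]
      refine setIntegral_congr_fun measurableSet_Ioi (fun x hx => ?_)
      have hx0 : (0:ℝ) < x := hz0.trans hx
      rw [show β * θ - θ - 1 = β * θ + (-θ - 1) by ring, Real.rpow_add hx0]
      ring
    rw [inner, hg]
    have e1 : (z ^ (-θ)) ^ (1 - β) = z ^ (β * θ - θ - 1 + 1) := by
      rw [← Real.rpow_mul hz0.le]
      congr 1; ring
    simp only [smul_eq_mul, e1, abs_neg, abs_of_pos hθ]
    have hne : β * θ - θ - 1 + 1 ≠ 0 := by nlinarith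
    rw [show β * θ - θ - 1 + 1 = (β-1)*θ by ring] at *
    have hne : (β-1)*θ ≠ 0 := by
      exact mul_ne_zero (by linarith) hθ.ne'
    field_simp
    ring_nf
    field_simp [show (-1 + β) ≠ 0 by intro h; linarith]
    ring
  rw [step1, integral_comp_rpow_Ioi g (neg_ne_zero.mpr hθ.ne')]
  have step2 : (∫ y in Set.Ioi (0:ℝ), g y)
      = (lam^2/(p*(1-β))) * ((lam/p) ^ (-(1-β+1)/1) * (1/1) * Real.Gamma ((1-β+1)/1)) := by
    rw [hg, integral_const_mul, ← integral_rpow_mul_exp_neg_mul_rpow one_pos (by linarith) hb]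
    congr 1
    refine setIntegral_congr_fun measurableSet_Ioi (fun y hy => ?_)
    rw [Real.rpow_one]
  rw [step2]
  rw [show -(1-β+1)/1 = β - 2 by ring, show (1-β+1)/1 = (1-β) + 1 by ring,
    Real.Gamma_add_one h1β.ne']
  have e2 : (lam/p) ^ (β-2) = lam^(β-2) * (p^(β-2))⁻¹ := by
    rw [Real.div_rpow hlam.le hp0.le, div_eq_mul_inv]
  have key : lam^2 * lam^(β-2) = lam^β := by
    rw [← Real.rpow_two, ← Real.rpow_add hlam]; norm_num
  have ep : (p:ℝ)^(β-2) = (p^(1-β))⁻¹ * p⁻¹ := by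
    rw [← Real.rpow_neg_one p, ← Real.rpow_neg hp0.le (1-β), ← Real.rpow_add hp0]
    congr 1; ring
  rw [e2, ep]
  have h1 : p ^ (1-β) ≠ 0 := (Real.rpow_pos_of_pos hp0 _).ne'
  field_simp
  linear_combination key
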